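/- Let F be a field, α_1,...,α_n distinct nonzero elements, G = ∏(x - α_i), and fix integers k, t with t(k-1) < n. Suppose λ, R, ω, ψ ∈ F[x] satisfy λR - ωG = ψ, with deg R ≤ n - 1, deg ω ≤ deg λ - 1, and deg ψ ≤ deg λ + t(k-1). Then rev(λ)·rev(R) ≡ rev(ω)·rev(G) (mod x^{n - t(k-1) - 1}), where rev(p) = x^{d}p(1/x) with d being the corresponding degree bound (deg λ for λ, n-1 for R, deg λ - 1 for ω, n + deg λ - 1 for G·ω). -/

import Mathlib

open Polynomial

/-- Reversing the Gao key equation `λR - ωG = ψ` yields the syndrome key equation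
`rev(λ)·rev(R) ≡ rev(ω)·rev(G) (mod x^(n-t(k-1)-1))`, where `rev` is coefficient
reversal with respect to the stated degree bounds (`deg λ` for `λ`, `n-1` for `R`,
`deg λ - 1` for `ω`, `n` for `G`). -/
theorem reversed_key_equation {F : Type*} [Field F] {n k t : ℕ}
    (α : Fin n → F) (hα : Function.Injective α) (h0 : ∀ i, α i ≠ 0)
    (htk : t * (k - 1) < n)
    (lam R ω ψ : F[X])
    (hkey : lam * R - ω * (∏ i, (X - C (α i))) = ψ)
    (hR : R.degree ≤ (n - 1 : ℕ)) (hω : ω.degree < lam.degree)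
    (hψ : ψ.degree ≤ lam.degree + (t * (k - 1) : ℕ)) :
    X ^ (n - t * (k - 1) - 1) ∣
      reflect lam.natDegree lam * reflect (n - 1) R -
        reflect (lam.natDegree - 1) ω * reflect n (∏ i, (X - C (α i))) := by
  set G : F[X] := ∏ i, (X - C (α i)) with hGdef
  set m := t * (k - 1) with hm
  have hlam0 : lam ≠ 0 := by
    rintro rfl
    simp [degree_zero] at hω
  have hdeglam : lam.degree = (lam.natDegree : WithBot ℕ) := degree_eq_natDegree hlam0
  set D := lam.natDegree with hD
  have hψd : ψ.natDegree ≤ D + m := by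
    apply natDegree_le_iff_degree_le.mpr
    refine le_trans hψ ?_
    rw [hdeglam]
    exact_mod_cast le_of_eq (by push_cast; ring)
  have hRn : R.natDegree ≤ n - 1 := natDegree_le_iff_degree_le.mpr hR
  have hGn : G.natDegree ≤ n := by
    have h := natDegree_prod_le (Finset.univ : Finset (Fin n))
      (fun i => X - C (α i))
    exact h.trans (by simp)
  have hdvd : X ^ (n - m - 1) ∣ reflect (D + (n - 1)) ψ := by
    rw [X_pow_dvd_iff]
    intro i hi
    rw [coeff_reflect, revAt_le (by omega : i ≤ D + (n - 1))]
    exact coeff_eq_zero_of_natDegree_lt (by omega)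
  rcases Nat.eq_zero_or_pos D with hD0 | hD1
  · -- then ω = 0 and lam * R = ψ
    have hω0 : ω = 0 := by
      rw [hdeglam, hD0] at hω
      exact degree_eq_bot.mp (Nat.WithBot.lt_zero_iff.mp (by exact_mod_cast hω))
    rw [hω0, reflect_zero, zero_mul, sub_zero,
      ← reflect_mul lam R le_rfl hRn]
    rw [hω0, zero_mul, sub_zero] at hkey
    rw [hkey]
    exact hdvd
  · have hωn : ω.natDegree ≤ D - 1 := by
      rcases eq_or_ne ω 0 with rfl | hω0
      · simp
      · have := natDegree_lt_natDegree hω0 hω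
        omega
    rw [← reflect_mul lam R le_rfl hRn,
      ← reflect_mul ω G hωn hGn,
      (by omega : D - 1 + n = D + (n - 1)),
      ← reflect_sub, hkey]
    exact hdvd
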